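/- Uniform boundedness of ADMM iterates: suppose the augmented Lagrangian L_ρ has a finite saddle point ((x¹*, x²*); y*) with x¹* = x²*. Then for any stepsize 0 < α < ρ, the ADMM iterates (x^{1,k}, x^{2,k}, y^k) satisfy: the sequence ‖y^k - y*‖² + αρ‖x^{2,k} - x²*‖² + α(ρ - α)‖(x^{1,k} - x^{2,k}) - (x¹* - x²*)‖² is nonincreasing in k; in particular all iterates remain in a bounded set independent of α ∈ (0, ρ). -/

import Mathlib

open scoped InnerProductSpace

lemma vi_of_min {E : Type*} [NormedAddCommGroup E] [InnerProductSpace ℝ E]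
    {ψ : E → ℝ} (hψ : ConvexOn ℝ Set.univ ψ) {ρ : ℝ} (hρ : 0 < ρ) (v m : E)
    (hmin : ∀ u, ψ m + (ρ/2)*‖m - v‖^2 ≤ ψ u + (ρ/2)*‖u - v‖^2) (u : E) :
    ψ m + ρ * ⟪v - m, u - m⟫_ℝ ≤ ψ u := by
  apply le_of_forall_sub_le
  intro ε hε
  set c : ℝ := (ρ/2) * ‖u - m‖^2 with hc
  have hc0 : 0 ≤ c := by positivity
  set t : ℝ := min 1 (ε / (c+1)) with ht
  have htpos : 0 < t := lt_min one_pos (div_pos hε (by linarith))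
  have ht1 : t ≤ 1 := min_le_left _ _
  have htc : t * c ≤ ε := by
    have h2 : t ≤ ε / (c+1) := min_le_right _ _
    have : t * (c+1) ≤ ε := by
      rw [← le_div_iff₀ (by linarith)]; exact h2
    nlinarith
  have hcx : ψ ((1-t) • m + t • u) ≤ (1-t) * ψ m + t * ψ u :=
    hψ.2 (Set.mem_univ m) (Set.mem_univ u) (by linarith) (le_of_lt htpos) (by ring)
  have hpt : (1-t) • m + t • u = m + t • (u - m) := by module
  have hexp : ‖m + t • (u - m) - v‖^2
      = ‖m - v‖^2 + 2*t*⟪m - v, u - m⟫_ℝ + t^2*‖u - m‖^2 := by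
    have h1 : m + t • (u - m) - v = (m - v) + t • (u - m) := by module
    rw [h1, norm_add_sq_real, real_inner_smul_right, norm_smul]
    simp [Real.norm_eq_abs, mul_pow, sq_abs]
    ring
  have hmin' := hmin (m + t • (u - m))
  rw [hpt] at hcx
  have hswap : ⟪v - m, u - m⟫_ℝ = -⟪m - v, u - m⟫_ℝ := by
    rw [← neg_sub m v, inner_neg_left]
  have hD : 0 ≤ t * ((ψ u - ψ m) + ρ * ⟪m - v, u - m⟫_ℝ + t * c) := by nlinarith
  have hD2 : 0 ≤ (ψ u - ψ m) + ρ * ⟪m - v, u - m⟫_ℝ + t * c :=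
    nonneg_of_mul_nonneg_right hD htpos
  rw [hswap]; linarith

lemma convexOn_inner_const {E : Type*} [NormedAddCommGroup E] [InnerProductSpace ℝ E]
    (c : E) : ConvexOn ℝ Set.univ (fun x => ⟪c, x⟫_ℝ) :=
  ⟨convex_univ, fun x _ y _ a b _ _ _ => le_of_eq (by
    simp [inner_add_right, real_inner_smul_right])⟩

lemma convexOn_g {E F : Type*} [NormedAddCommGroup E] [InnerProductSpace ℝ E]
    [NormedAddCommGroup F] [InnerProductSpace ℝ F]
    (A : E →ₗ[ℝ] F) (b : F) :
    ConvexOn ℝ Set.univ (fun u => (1/2) * ‖A u - b‖^2) := by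
  refine ⟨convex_univ, fun x _ y _ a c ha hc hac => ?_⟩
  have hb : a • b + c • b = b := by rw [← add_smul, hac, one_smul]
  have h1 : A (a • x + c • y) - b = a • (A x - b) + c • (A y - b) := by
    simp only [map_add, map_smul]
    nth_rewrite 1 [← hb]
    module
  simp only [smul_eq_mul, h1]
  have h2 : ‖a • (A x - b) + c • (A y - b)‖ ≤ a * ‖A x - b‖ + c * ‖A y - b‖ := by
    calc ‖a • (A x - b) + c • (A y - b)‖ ≤ ‖a • (A x - b)‖ + ‖c • (A y - b)‖ :=
          norm_add_le _ _
      _ = a * ‖A x - b‖ + c * ‖A y - b‖ := by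
          rw [norm_smul, norm_smul, Real.norm_eq_abs, Real.norm_eq_abs,
            abs_of_nonneg ha, abs_of_nonneg hc]
  have h3 : (0:ℝ) ≤ ‖a • (A x - b) + c • (A y - b)‖ := norm_nonneg _
  have h4 : ‖a • (A x - b) + c • (A y - b)‖^2 ≤ (a * ‖A x - b‖ + c * ‖A y - b‖)^2 := by
    nlinarith
  nlinarith [h4, mul_nonneg (mul_nonneg ha hc) (sq_nonneg (‖A x - b‖ - ‖A y - b‖))]

lemma convexOn_finset_sum {E : Type*} [NormedAddCommGroup E] [InnerProductSpace ℝ E]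
    {ι : Type*} (t : Finset ι) (f : ι → E → ℝ)
    (hf : ∀ i ∈ t, ConvexOn ℝ Set.univ (f i)) :
    ConvexOn ℝ Set.univ (fun x => ∑ i ∈ t, f i x) := by
  classical
  induction t using Finset.induction with
  | empty => simpa using convexOn_const (0:ℝ) convex_univ
  | @insert i s hni ih =>
    simp only [Finset.sum_insert hni]
    exact (hf i (Finset.mem_insert_self i s)).add
      (ih fun i hi => hf i (Finset.mem_insert_of_mem hi))

lemma convexOn_h (n : ℕ) (G : Type) [Fintype G] (lam : ℝ) (hlam : 0 ≤ lam)
    (w : G → ℝ) (hw : ∀ g, 0 ≤ w g) (j : G → Finset (Fin n)) :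
    ConvexOn ℝ Set.univ (fun x : EuclideanSpace ℝ (Fin n) =>
      lam * ∑ g, w g * Real.sqrt (∑ t ∈ j g, x t ^ 2)) := by
  have key : ∀ g : G, ConvexOn ℝ Set.univ
      (fun x : EuclideanSpace ℝ (Fin n) => Real.sqrt (∑ t ∈ j g, x t ^ 2)) := by
    intro g
    let P : EuclideanSpace ℝ (Fin n) →ₗ[ℝ] EuclideanSpace ℝ (↥(j g)) :=
      { toFun := fun x => WithLp.toLp 2 (fun t : ↥(j g) => x t.1)
        map_add' := fun x y => by ext; simp
        map_smul' := fun r x => by ext; simp }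
    have h1 : (fun x : EuclideanSpace ℝ (Fin n) => Real.sqrt (∑ t ∈ j g, x t ^ 2))
        = fun x => ‖P x‖ := by
      funext x
      rw [EuclideanSpace.norm_eq]
      congr 1
      rw [← Finset.sum_coe_sort (j g) (fun t => x t ^ 2)]
      simp [P, Real.norm_eq_abs, sq_abs]
    rw [h1]
    have := (convexOn_univ_norm (E := EuclideanSpace ℝ (↥(j g)))).comp_linearMap P
    exact this
  have hsum : ConvexOn ℝ Set.univ (fun x : EuclideanSpace ℝ (Fin n) =>
      ∑ g, w g * Real.sqrt (∑ t ∈ j g, x t ^ 2)) := by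
    apply convexOn_finset_sum
    intro g _
    have := (key g).smul (hw g)
    simpa [smul_eq_mul] using this
  have := hsum.smul hlam
  simpa [smul_eq_mul] using this

set_option maxHeartbeats 1000000 in
/-- Uniform boundedness of ADMM iterates. If the augmented Lagrangian
has a finite saddle point `((x¹*, x²*); y*)` with `x¹* = x²*`, then for any stepsize
`0 < α < ρ` the ADMM iterates satisfy: the Lyapunov sequence
`‖y^k - y*‖² + αρ‖x^{2,k} - x²*‖² + α(ρ-α)‖(x^{1,k} - x^{2,k}) - (x¹* - x²*)‖²`
is nonincreasing (for `k ≥ 1`); in particular the iterates remain in a bounded set. -/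
theorem admm_iterates_uniformly_bounded
    (n d : ℕ) (G : Type) [Fintype G] (lam ρ α : ℝ) (hlam : 0 < lam) (hρ : 0 < ρ)
    (hα : 0 < α) (hαρ : α < ρ)
    (w : G → ℝ) (hw : ∀ g, 0 < w g) (j : G → Finset (Fin n))
    (M : Matrix (Fin d) (Fin n) ℝ) (b : EuclideanSpace ℝ (Fin d))
    (x1s x2s ys : ℕ → EuclideanSpace ℝ (Fin n))
    (x1star x2star ystar : EuclideanSpace ℝ (Fin n)) :
    let h : EuclideanSpace ℝ (Fin n) → ℝ := fun x =>
      lam * ∑ g, w g * Real.sqrt (∑ t ∈ j g, x t ^ 2)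
    let L : EuclideanSpace ℝ (Fin n) → EuclideanSpace ℝ (Fin n) →
        EuclideanSpace ℝ (Fin n) → ℝ := fun u1 u2 y =>
      h u1 + (1 / 2) * ‖Matrix.toEuclideanLin M u2 - b‖ ^ 2 + ⟪y, u1 - u2⟫_ℝ +
        (ρ / 2) * ‖u1 - u2‖ ^ 2
    -- saddle point with x¹* = x²*
    x1star = x2star →
    (∀ y, L x1star x2star y ≤ L x1star x2star ystar) →
    (∀ u1 u2, L x1star x2star ystar ≤ L u1 u2 ystar) →
    -- ADMM iterates
    (∀ k u, h (x1s (k + 1)) + (ρ / 2) * ‖x1s (k + 1) - x2s k + (1 / ρ) • ys k‖ ^ 2 ≤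
      h u + (ρ / 2) * ‖u - x2s k + (1 / ρ) • ys k‖ ^ 2) →
    (∀ k u, (1 / 2) * ‖Matrix.toEuclideanLin M (x2s (k + 1)) - b‖ ^ 2 +
        (ρ / 2) * ‖x2s (k + 1) - x1s (k + 1) - (1 / ρ) • ys k‖ ^ 2 ≤
      (1 / 2) * ‖Matrix.toEuclideanLin M u - b‖ ^ 2 +
        (ρ / 2) * ‖u - x1s (k + 1) - (1 / ρ) • ys k‖ ^ 2) →
    (∀ k, ys (k + 1) = ys k + α • (x1s (k + 1) - x2s (k + 1))) →
    ((∀ k, 1 ≤ k →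
        ‖ys (k + 1) - ystar‖ ^ 2 + α * ρ * ‖x2s (k + 1) - x2star‖ ^ 2 +
            α * (ρ - α) * ‖(x1s (k + 1) - x2s (k + 1)) - (x1star - x2star)‖ ^ 2 ≤
          ‖ys k - ystar‖ ^ 2 + α * ρ * ‖x2s k - x2star‖ ^ 2 +
            α * (ρ - α) * ‖(x1s k - x2s k) - (x1star - x2star)‖ ^ 2) ∧
      ∃ C : ℝ, ∀ k, ‖x1s k‖ ≤ C ∧ ‖x2s k‖ ≤ C ∧ ‖ys k‖ ≤ C) := by
  intro h L hstar hsad1 hsad2 hx1 hx2 hys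
  subst hstar
  clear hsad1
  have hL : ∀ u1 u2 y : EuclideanSpace ℝ (Fin n), L u1 u2 y = h u1 +
      (1 / 2) * ‖Matrix.toEuclideanLin M u2 - b‖ ^ 2 + ⟪y, u1 - u2⟫_ℝ +
      (ρ / 2) * ‖u1 - u2‖ ^ 2 := fun _ _ _ => rfl
  have hconvh : ConvexOn ℝ Set.univ h :=
    convexOn_h n G lam hlam.le w (fun g => (hw g).le) j
  set xs := x1star with hxs
  set g : EuclideanSpace ℝ (Fin n) → ℝ := fun u => (1/2) * ‖Matrix.toEuclideanLin M u - b‖^2 with hg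
  have hconvg : ConvexOn ℝ Set.univ g := convexOn_g (Matrix.toEuclideanLin M) b
  have hgu : ∀ u, g u = (1/2) * ‖Matrix.toEuclideanLin M u - b‖^2 := fun _ => rfl
  -- saddle-point variational inequalities
  have vistar1 : ∀ u : EuclideanSpace ℝ (Fin n), h xs + ⟪ystar, xs⟫_ℝ ≤ h u + ⟪ystar, u⟫_ℝ := by
    have hmin : ∀ u : EuclideanSpace ℝ (Fin n), (h xs + ⟪ystar, xs⟫_ℝ) + (ρ/2)*‖xs - xs‖^2 ≤
        (h u + ⟪ystar, u⟫_ℝ) + (ρ/2)*‖u - xs‖^2 := by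
      intro u
      have h0 := hsad2 u xs
      rw [hL, hL] at h0
      have e1 : ⟪ystar, u - xs⟫_ℝ = ⟪ystar, u⟫_ℝ - ⟪ystar, xs⟫_ℝ := inner_sub_right _ _ _
      simp only [sub_self, inner_zero_right, norm_zero] at h0 ⊢
      rw [e1] at h0
      linarith
    have := vi_of_min (hconvh.add (convexOn_inner_const ystar)) hρ xs xs hmin
    intro u
    have h1 := this u
    simp only [sub_self, inner_zero_left, Pi.add_apply] at h1
    linarith
  have vistar2 : ∀ u : EuclideanSpace ℝ (Fin n), g xs + ⟪-ystar, xs⟫_ℝ ≤ g u + ⟪-ystar, u⟫_ℝ := by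
    have hmin : ∀ u : EuclideanSpace ℝ (Fin n), (g xs + ⟪-ystar, xs⟫_ℝ) + (ρ/2)*‖xs - xs‖^2 ≤
        (g u + ⟪-ystar, u⟫_ℝ) + (ρ/2)*‖u - xs‖^2 := by
      intro u
      have h0 := hsad2 xs u
      rw [hL, hL] at h0
      have e1 : ⟪ystar, xs - u⟫_ℝ = ⟪ystar, xs⟫_ℝ - ⟪ystar, u⟫_ℝ := inner_sub_right _ _ _
      have e2 : ‖xs - u‖ = ‖u - xs‖ := norm_sub_rev _ _
      simp only [sub_self, inner_zero_right, norm_zero, inner_neg_left] at h0 ⊢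
      rw [e1, e2] at h0
      rw [hgu xs, hgu u]
      linarith
    have := vi_of_min (hconvg.add (convexOn_inner_const (-ystar))) hρ xs xs hmin
    intro u
    have h1 := this u
    simp only [sub_self, inner_zero_left, Pi.add_apply] at h1
    linarith
  -- main monotonicity step
  have key : ∀ k, ‖ys (k+1) - ystar‖^2 + α*ρ*‖x2s (k+1) - xs‖^2
      + α*(ρ-α)*‖x1s (k+1) - x2s (k+1)‖^2 ≤
      ‖ys k - ystar‖^2 + α*ρ*‖x2s k - xs‖^2 + α*(ρ-α)*‖x1s k - x2s k‖^2 := by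
    intro k
    set p := x1s (k+1) with hp
    set q := x2s (k+1) with hq
    set q0 := x2s k with hq0
    set y := ys k with hy
    -- x1-step VI
    have hmin1 : ∀ u : EuclideanSpace ℝ (Fin n), h p + (ρ/2)*‖p - (q0 - (1/ρ) • y)‖^2 ≤
        h u + (ρ/2)*‖u - (q0 - (1/ρ) • y)‖^2 := by
      intro u
      have h0 := hx1 k u
      have e1 : p - (q0 - (1/ρ) • y) = p - q0 + (1/ρ) • y := by module
      have e2 : u - (q0 - (1/ρ) • y) = u - q0 + (1/ρ) • y := by module
      rw [e1, e2]
      exact h0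
    have vi1 := vi_of_min hconvh hρ (q0 - (1/ρ) • y) p hmin1
    -- x2-step VI
    have hmin2 : ∀ u : EuclideanSpace ℝ (Fin n), g q + (ρ/2)*‖q - (p + (1/ρ) • y)‖^2 ≤
        g u + (ρ/2)*‖u - (p + (1/ρ) • y)‖^2 := by
      intro u
      have h0 := hx2 k u
      have e1 : q - (p + (1/ρ) • y) = q - p - (1/ρ) • y := by module
      have e2 : u - (p + (1/ρ) • y) = u - p - (1/ρ) • y := by module
      rw [hgu q, hgu u, e1, e2]
      exact h0
    have vi2 := vi_of_min hconvg hρ (p + (1/ρ) • y) q hmin2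
    have hA : (⟪y, p - xs⟫_ℝ - ⟪ystar, p - xs⟫_ℝ)
        + ρ*(‖p - xs‖^2 - ⟪p - xs, q0 - xs⟫_ℝ) ≤ 0 := by
      have h1 := vi1 xs
      have h2 := vistar1 p
      have idA : ρ * ⟪(q0 - (1/ρ) • y) - p, xs - p⟫_ℝ
          = ⟪y, p - xs⟫_ℝ + ρ*(‖p - xs‖^2 - ⟪p - xs, q0 - xs⟫_ℝ) := by
        have ev : (q0 - (1/ρ) • y) - p = (q0 - xs) - (p - xs) - (1/ρ) • y := by module
        have ev2 : xs - p = -(p - xs) := by module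
        rw [ev, ev2, inner_neg_right, inner_sub_left, inner_sub_left,
          real_inner_smul_left, real_inner_self_eq_norm_sq,
          real_inner_comm (q0 - xs) (p - xs)]
        field_simp
        ring
      have e3 : ⟪ystar, p⟫_ℝ - ⟪ystar, xs⟫_ℝ = ⟪ystar, p - xs⟫_ℝ :=
        (inner_sub_right _ _ _).symm
      have e4 : ⟪y, p - xs⟫_ℝ + ρ*(‖p - xs‖^2 - ⟪p - xs, q0 - xs⟫_ℝ)
          ≤ ⟪ystar, p - xs⟫_ℝ := by rw [← idA, ← e3]; linarith
      linarith
    have hB : 0 ≤ (⟪y, q - xs⟫_ℝ - ⟪ystar, q - xs⟫_ℝ)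
        + ρ*(⟪p - xs, q - xs⟫_ℝ - ‖q - xs‖^2) := by
      have h1 := vi2 xs
      have h2 := vistar2 q
      have idB : ρ * ⟪(p + (1/ρ) • y) - q, xs - q⟫_ℝ
          = -⟪y, q - xs⟫_ℝ - ρ*(⟪p - xs, q - xs⟫_ℝ - ‖q - xs‖^2) := by
        have ev : (p + (1/ρ) • y) - q = (p - xs) - (q - xs) + (1/ρ) • y := by module
        have ev2 : xs - q = -(q - xs) := by module
        rw [ev, ev2, inner_neg_right, inner_add_left, inner_sub_left,
          real_inner_smul_left, real_inner_self_eq_norm_sq]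
        field_simp
        ring
      have e3 : ⟪-ystar, xs⟫_ℝ - ⟪-ystar, q⟫_ℝ = ⟪ystar, q - xs⟫_ℝ := by
        simp only [inner_neg_left, inner_sub_right]
        ring
      have e4 : -⟪y, q - xs⟫_ℝ - ρ*(⟪p - xs, q - xs⟫_ℝ - ‖q - xs‖^2)
          ≤ -⟪ystar, q - xs⟫_ℝ := by
        rw [← idB]
        have h2' : g xs + ⟪-ystar, xs⟫_ℝ ≤ g q + ⟪-ystar, q⟫_ℝ := h2
        have e3' := e3
        linarith [h1, h2', e3'.le, e3'.ge]
      linarith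
    -- expansions
    have G1 : ‖ys (k+1) - ystar‖^2 = ‖y - ystar‖^2
        + 2*α*(⟪y - ystar, p - xs⟫_ℝ - ⟪y - ystar, q - xs⟫_ℝ)
        + α^2*(‖p - xs‖^2 - 2*⟪p - xs, q - xs⟫_ℝ + ‖q - xs‖^2) := by
      have ev : ys (k+1) - ystar = (y - ystar) + α • ((p - xs) - (q - xs)) := by
        rw [hys k]; module
      rw [ev]
      simp only [norm_add_sq_real, norm_sub_sq_real, real_inner_smul_right,
        inner_sub_right, inner_sub_left, norm_smul, Real.norm_eq_abs, mul_pow, sq_abs,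
        real_inner_self_eq_norm_sq]
      ring
    have G3 : ‖p - q‖^2 = ‖p - xs‖^2 - 2*⟪p - xs, q - xs⟫_ℝ + ‖q - xs‖^2 := by
      have ev : p - q = (p - xs) - (q - xs) := by module
      rw [ev, norm_sub_sq_real]
    have HY1 : ⟪y - ystar, p - xs⟫_ℝ = ⟪y, p - xs⟫_ℝ - ⟪ystar, p - xs⟫_ℝ :=
      inner_sub_left _ _ _
    have HY2 : ⟪y - ystar, q - xs⟫_ℝ = ⟪y, q - xs⟫_ℝ - ⟪ystar, q - xs⟫_ℝ :=
      inner_sub_left _ _ _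
    have HR : (0:ℝ) ≤ α*(ρ-α)*‖x1s k - x2s k‖^2 := by
      have h5 : (0:ℝ) < ρ - α := by linarith
      positivity
    have HA2 : 2*α*((⟪y, p - xs⟫_ℝ - ⟪ystar, p - xs⟫_ℝ)
        + ρ*(‖p - xs‖^2 - ⟪p - xs, q0 - xs⟫_ℝ)) ≤ 0 :=
      mul_nonpos_iff.2 (Or.inl ⟨by positivity, hA⟩)
    have HB2 : 0 ≤ 2*α*((⟪y, q - xs⟫_ℝ - ⟪ystar, q - xs⟫_ℝ)
        + ρ*(⟪p - xs, q - xs⟫_ℝ - ‖q - xs‖^2)) := mul_nonneg (by positivity) hB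
    have HP2 : (0:ℝ) ≤ α*ρ*(‖p - xs‖^2 - 2*⟪p - xs, q0 - xs⟫_ℝ + ‖q0 - xs‖^2) := by
      have h6 : (0:ℝ) ≤ ‖p - xs‖^2 - 2*⟪p - xs, q0 - xs⟫_ℝ + ‖q0 - xs‖^2 := by
        rw [← norm_sub_sq_real]; positivity
      exact mul_nonneg (le_of_lt (mul_pos hα hρ)) h6
    rw [G1, G3, HY1, HY2]
    linarith [HA2, HB2, HP2, HR]
  constructor
  · intro k _
    simp only [sub_self, sub_zero]
    exact key k
  · -- boundedness
    set V : ℕ → ℝ := fun k => ‖ys k - ystar‖^2 + α*ρ*‖x2s k - xs‖^2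
      + α*(ρ-α)*‖x1s k - x2s k‖^2 with hV
    have hmono : ∀ k, V k ≤ V 0 := by
      intro k
      induction k with
      | zero => exact le_rfl
      | succ m ih => exact le_trans (key m) ih
    have hρα : (0:ℝ) < ρ - α := by linarith
    have hb1 : ∀ k, ‖ys k - ystar‖^2 ≤ V 0 := by
      intro k
      have h1 := hmono k
      have h2 : (0:ℝ) ≤ α*ρ*‖x2s k - xs‖^2 := by positivity
      have h3 : (0:ℝ) ≤ α*(ρ-α)*‖x1s k - x2s k‖^2 := by positivity
      simp only [hV] at h1 ⊢
      linarith
    have hb2 : ∀ k, ‖x2s k - xs‖^2 ≤ V 0 / (α*ρ) := by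
      intro k
      rw [le_div_iff₀ (mul_pos hα hρ)]
      have h1 := hmono k
      have h2 : (0:ℝ) ≤ ‖ys k - ystar‖^2 := by positivity
      have h3 : (0:ℝ) ≤ α*(ρ-α)*‖x1s k - x2s k‖^2 := by positivity
      simp only [hV] at h1 ⊢
      nlinarith
    have hb3 : ∀ k, ‖x1s k - x2s k‖^2 ≤ V 0 / (α*(ρ-α)) := by
      intro k
      rw [le_div_iff₀ (mul_pos hα hρα)]
      have h1 := hmono k
      have h2 : (0:ℝ) ≤ ‖ys k - ystar‖^2 := by positivity
      have h3 : (0:ℝ) ≤ α*ρ*‖x2s k - xs‖^2 := by positivity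
      simp only [hV] at h1 ⊢
      nlinarith
    refine ⟨Real.sqrt (V 0) + ‖ystar‖ + Real.sqrt (V 0 / (α*ρ)) + ‖xs‖
      + Real.sqrt (V 0 / (α*(ρ-α))), fun k => ?_⟩
    have s1 : ‖ys k - ystar‖ ≤ Real.sqrt (V 0) := by
      have := Real.sqrt_le_sqrt (hb1 k)
      rwa [Real.sqrt_sq (norm_nonneg _)] at this
    have s2 : ‖x2s k - xs‖ ≤ Real.sqrt (V 0 / (α*ρ)) := by
      have := Real.sqrt_le_sqrt (hb2 k)
      rwa [Real.sqrt_sq (norm_nonneg _)] at this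
    have s3 : ‖x1s k - x2s k‖ ≤ Real.sqrt (V 0 / (α*(ρ-α))) := by
      have := Real.sqrt_le_sqrt (hb3 k)
      rwa [Real.sqrt_sq (norm_nonneg _)] at this
    have ty := norm_sub_norm_le (ys k) ystar
    have tx2 := norm_sub_norm_le (x2s k) xs
    have tx1 := norm_sub_norm_le (x1s k) (x2s k)
    have nn1 : (0:ℝ) ≤ Real.sqrt (V 0) := Real.sqrt_nonneg _
    have nn2 : (0:ℝ) ≤ Real.sqrt (V 0 / (α*ρ)) := Real.sqrt_nonneg _
    have nn3 : (0:ℝ) ≤ Real.sqrt (V 0 / (α*(ρ-α))) := Real.sqrt_nonneg _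
    have nn4 : (0:ℝ) ≤ ‖ystar‖ := norm_nonneg _
    have nn5 : (0:ℝ) ≤ ‖xs‖ := norm_nonneg _
    exact ⟨by linarith, by linarith, by linarith⟩
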